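/- (Corollary 3.1, pointwise form) Let dim V = 2n and let (W, D, D⊥) be a CR datum. Then W is generic, i.e. dim D⊥ = 2n - dim W, if and only if W is coisotropic with respect to g̃, i.e. W^{⊥g̃} ⊆ W. -/

import Mathlib

/-- For a bilinear form `h` on `V` and a subspace `W`, the `h`-orthogonal space
`W^{⊥h} = {v ∈ V : h(v, w) = 0 for all w ∈ W}`. -/
def perpBilin {V : Type*} [AddCommGroup V] [Module ℝ V]
    (h : V →ₗ[ℝ] V →ₗ[ℝ] ℝ) (W : Submodule ℝ V) : Submodule ℝ V where
  carrier := {v | ∀ w ∈ W, h v w = 0}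
  add_mem' := by
    intro a b ha hb w hw
    simp [ha w hw, hb w hw]
  zero_mem' := by
    intro w hw
    simp
  smul_mem' := by
    intro c a ha w hw
    simp [ha w hw]

lemma mem_perpBilin {V : Type*} [AddCommGroup V] [Module ℝ V]
    {h : V →ₗ[ℝ] V →ₗ[ℝ] ℝ} {W : Submodule ℝ V} {x : V} :
    x ∈ perpBilin h W ↔ ∀ w ∈ W, h x w = 0 := Iff.rfl

/-- **Corollary 3.1, pointwise form.** Let `dim V = 2n` and let
`(W, D, Dp)` be a CR datum in the Norden vector space `(V, J, g)`.  Then `W` is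
generic, i.e. `dim Dp = 2n - dim W`, if and only if `W` is coisotropic with
respect to the associated metric `g̃ = g ∘ J`, i.e. `W^{⊥g̃} ⊆ W`. -/
theorem generic_iff_coisotropic
    (V : Type*) [AddCommGroup V] [Module ℝ V] [FiniteDimensional ℝ V]
    (J : V →ₗ[ℝ] V) (hJ : ∀ x, J (J x) = -x)
    (g : V →ₗ[ℝ] V →ₗ[ℝ] ℝ)
    (hsymm : ∀ x y, g x y = g y x)
    (hnd : ∀ x, (∀ y, g x y = 0) → x = 0)
    (hN : ∀ x y, g (J x) (J y) = -g x y)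
    (n : ℕ) (hdim : Module.finrank ℝ V = 2 * n)
    (W D Dp : Submodule ℝ V)
    (hDW : D ≤ W) (hDpW : Dp ≤ W)
    (hsum : D ⊔ Dp = W) (hint : D ⊓ Dp = ⊥)
    (horth : ∀ x ∈ D, ∀ y ∈ Dp, g x y = 0)
    (hWnd : W ⊓ perpBilin g W = ⊥)
    (hJD : Submodule.map J D = D)
    (hJDp : Submodule.map J Dp ≤ perpBilin g W) :
    Module.finrank ℝ Dp = 2 * n - Module.finrank ℝ W ↔
      perpBilin (g ∘ₗ J) W ≤ W := by
  classical
  set P := perpBilin g W with hP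
  -- J as a linear equivalence
  have hJinj : Function.Injective J := by
    intro x y hxy
    have := congrArg J hxy
    rw [hJ, hJ] at this
    exact neg_injective this
  let e : V ≃ₗ[ℝ] V :=
    { toLinearMap := J
      invFun := fun x => -J x
      left_inv := fun x => by simp [hJ x]
      right_inv := fun x => by simp [hJ x] }
  have hmapJ : ∀ S : Submodule ℝ V, Module.finrank ℝ (Submodule.map J S) = Module.finrank ℝ S :=
    fun S => LinearEquiv.finrank_map_eq e S
  have hmapJJ : ∀ S : Submodule ℝ V, Submodule.map J (Submodule.map J S) = S := by
    intro S
    ext x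
    constructor
    · rintro ⟨y, ⟨z, hz, rfl⟩, rfl⟩
      rw [hJ]
      exact S.neg_mem hz
    · intro hx
      exact ⟨J (-x), ⟨-x, S.neg_mem hx, rfl⟩, by rw [hJ]; simp⟩
  -- P as mathlib orthogonal
  have hPorth : P = LinearMap.BilinForm.orthogonal g W := by
    ext x
    simp only [mem_perpBilin, LinearMap.BilinForm.mem_orthogonal_iff, LinearMap.BilinForm.IsOrtho]
    exact ⟨fun h w hw => (hsymm w x) ▸ h w hw, fun h w hw => (hsymm x w) ▸ h w hw⟩
  have hgnd : LinearMap.BilinForm.Nondegenerate g :=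
    ⟨hnd, fun y hy => hnd y (fun x => by rw [hsymm]; exact hy x)⟩
  have hgrefl : g.IsRefl := fun x y h => (hsymm y x) ▸ h
  have hPrank : Module.finrank ℝ P = 2 * n - Module.finrank ℝ W := by
    rw [hPorth, LinearMap.BilinForm.finrank_orthogonal (B := g) hgnd, hdim]
  -- the g̃-perp is J(P)
  have hperpTilde : perpBilin (g ∘ₗ J) W = Submodule.map J P := by
    ext v
    simp only [mem_perpBilin, LinearMap.comp_apply]
    constructor
    · intro hv
      refine ⟨-(J v), P.neg_mem (fun w hw => hv w hw), by rw [map_neg, hJ]; simp⟩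
    · rintro ⟨p, hp, rfl⟩ w hw
      rw [hJ]
      have := hp w hw
      simpa using P.neg_mem hp w hw
  constructor
  · -- generic → coisotropic
    intro hgen
    have h1 : Module.finrank ℝ (Submodule.map J Dp) = Module.finrank ℝ P := by
      rw [hmapJ, hgen, hPrank]
    have h2 : Submodule.map J Dp = P :=
      Submodule.eq_of_le_of_finrank_le hJDp (le_of_eq h1.symm)
    rw [hperpTilde, ← h2, hmapJJ]
    exact hDpW
  · -- coisotropic → generic
    intro hco
    rw [hperpTilde] at hco
    have hPle : P ≤ Submodule.map J Dp := by
      intro v hv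
      have hJv : J v ∈ W := hco ⟨v, hv, rfl⟩
      rw [← hsum] at hJv
      obtain ⟨d, hd, e', he', hde⟩ := Submodule.mem_sup.mp hJv
      -- J d = -v - J e'
      have hJvv : J d + J e' = -v := by
        rw [← map_add, hde, hJ]
      have hJe'P : J e' ∈ P := hJDp ⟨e', he', rfl⟩
      have hJdP : J d ∈ P := by
        have : J d = -v - J e' := eq_sub_of_add_eq hJvv
        rw [this]
        exact P.sub_mem (P.neg_mem hv) hJe'P
      have hJdD : J d ∈ D := hJD ▸ ⟨d, hd, rfl⟩
      have hJd0 : J d = 0 := by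
        have : J d ∈ W ⊓ P := ⟨hDW hJdD, hJdP⟩
        rw [hWnd] at this
        exact this
      have hd0 : d = 0 := by
        have := hJinj (hJd0.trans (map_zero J).symm)
        exact this
      have hJve : J v = e' := by rw [← hde, hd0, zero_add]
      refine ⟨-e', Dp.neg_mem he', ?_⟩
      rw [map_neg, ← hJve, hJ, neg_neg]
    have heq : Submodule.map J Dp = P := le_antisymm hJDp hPle
    rw [← hmapJ Dp, heq, hPrank]
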